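/- The generating function for two-rowed plane partitions with rows of length n, i.e. sequences (a₁,b₁,...,aₙ,bₙ) of nonnegative integers with aᵢ ≥ bᵢ, aᵢ ≥ a_{i+1}, bᵢ ≥ b_{i+1}, counted by q^{Σaᵢ + Σbᵢ}, equals 1/((q;q)ₙ (q²;q)ₙ). -/

import Mathlib

noncomputable section
open PowerSeries

/-- The number of two-rowed plane partitions `(a₁,…,aₙ; b₁,…,bₙ)` of `N`:
nonnegative integers with `aᵢ ≥ bᵢ`, `aᵢ ≥ a_{i+1}`, `bᵢ ≥ b_{i+1}`, and
`Σaᵢ + Σbᵢ = N`. -/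
def twoRowCount (n N : ℕ) : ℕ :=
  Nat.card {p : (Fin n → ℕ) × (Fin n → ℕ) //
    (∀ i, p.2 i ≤ p.1 i) ∧
    (∀ i : Fin n, ∀ h : (i : ℕ) + 1 < n, p.1 ⟨(i : ℕ) + 1, h⟩ ≤ p.1 i) ∧
    (∀ i : Fin n, ∀ h : (i : ℕ) + 1 < n, p.2 ⟨(i : ℕ) + 1, h⟩ ≤ p.2 i) ∧
    (∑ i, p.1 i) + (∑ i, p.2 i) = N}

set_option linter.unusedSectionVars false
set_option linter.unusedVariables false
set_option maxHeartbeats 1000000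

namespace TwoRowAux

open Finset



def Mf (a b : ℕ → ℕ) : ℕ → ℕ
  | 0 => a 0 - b 0
  | i + 1 => min (Mf a b i) (a (i + 1) - b (i + 1))

/-- plane-partition pairs, ℕ-indexed and padded with zeros -/
def PP (n N : ℕ) :=
  {p : (ℕ → ℕ) × (ℕ → ℕ) //
    ((∀ i, p.2 i ≤ p.1 i) ∧ (∀ i, p.1 (i + 1) ≤ p.1 i) ∧ (∀ i, p.2 (i + 1) ≤ p.2 i) ∧
      (∀ i, n ≤ i → p.1 i = 0)) ∧
    ∑ i ∈ Finset.range n, (p.1 i + p.2 i) = N}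

/-- pairs of decreasing sequences with statistic `ΣA + ΣB + A 0` -/
def DD (n N : ℕ) :=
  {p : (ℕ → ℕ) × (ℕ → ℕ) //
    ((∀ i, p.1 (i + 1) ≤ p.1 i) ∧ (∀ i, p.2 (i + 1) ≤ p.2 i) ∧
      (∀ i, n ≤ i → p.1 i = 0) ∧ (∀ i, n ≤ i → p.2 i = 0)) ∧
    (∑ i ∈ Finset.range n, (p.1 i + p.2 i)) + p.1 0 = N}

section Forward

variable {n : ℕ} (a b : ℕ → ℕ)
  (hba : ∀ i, b i ≤ a i) (ha : ∀ i, a (i + 1) ≤ a i) (hb : ∀ i, b (i + 1) ≤ b i)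
  (ha0 : ∀ i, n ≤ i → a i = 0)

def Af (a b : ℕ → ℕ) (i : ℕ) : ℕ := a i - Mf a b i
def Bf (a b : ℕ → ℕ) (i : ℕ) : ℕ := Mf a b i + b (i + 1)

include ha0 hba in
lemma hb0 : ∀ i, n ≤ i → b i = 0 := fun i hi => by
  have := hba i; have := ha0 i hi; omega

include ha0 hba in
lemma Mf_zero : ∀ i, n ≤ i → Mf a b i = 0 := fun i hi => by
  have h1 : Mf a b i ≤ a i - b i := by
    cases i with
    | zero => exact le_refl _
    | succ j => exact min_le_right _ _
  have := ha0 i hi; omega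

lemma Mf_le' (i : ℕ) : Mf a b i ≤ a i - b i := by
  cases i with
  | zero => exact le_refl _
  | succ j => exact min_le_right _ _

include hba ha hb in
lemma Af_anti : ∀ i, Af a b (i + 1) ≤ Af a b i := by
  intro i
  unfold Af
  rcases le_total (Mf a b i) (a (i + 1) - b (i + 1)) with h | h
  · have : Mf a b (i + 1) = Mf a b i := min_eq_left h
    rw [this]
    exact Nat.sub_le_sub_right (ha i) _
  · have hM : Mf a b (i + 1) = a (i + 1) - b (i + 1) := min_eq_right h
    rw [hM]
    have h1 : a (i + 1) - (a (i + 1) - b (i + 1)) = b (i + 1) := by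
      have := hba (i + 1); omega
    rw [h1]
    have h2 : Mf a b i ≤ a i - b i := Mf_le' a b i
    have := hba i; have := hb i
    omega

include hb in
lemma Bf_anti : ∀ i, Bf a b (i + 1) ≤ Bf a b i := fun i =>
  add_le_add (min_le_left _ _) (hb (i + 1))

include hba ha0 in
lemma Af_zero : ∀ i, n ≤ i → Af a b i = 0 := fun i hi => by
  unfold Af; rw [ha0 i hi]; omega

include hba ha0 in
lemma Bf_zero : ∀ i, n ≤ i → Bf a b i = 0 := fun i hi => by
  unfold Bf
  rw [Mf_zero a b hba ha0 i hi, hb0 a b hba ha0 (i + 1) (by omega)]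

include hba ha0 in
lemma Af_Bf_stat :
    (∑ i ∈ Finset.range n, (Af a b i + Bf a b i)) + Af a b 0 = ∑ i ∈ Finset.range n, (a i + b i) := by
  have hpt : ∀ i, Af a b i + Bf a b i = a i + b (i + 1) := by
    intro i
    unfold Af Bf
    have h1 : Mf a b i ≤ a i - b i := Mf_le' a b i
    have := hba i
    omega
  have hA0 : Af a b 0 = b 0 := by
    unfold Af
    show a 0 - (a 0 - b 0) = b 0
    have := hba 0; omega
  rw [hA0, Finset.sum_congr rfl fun i _ => hpt i]
  rw [Finset.sum_add_distrib, Finset.sum_add_distrib]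
  have hshift : (∑ i ∈ Finset.range n, b (i + 1)) + b 0 = ∑ i ∈ Finset.range n, b i := by
    have h1 : ∑ i ∈ Finset.range (n + 1), b i = (∑ i ∈ Finset.range n, b (i + 1)) + b 0 :=
      Finset.sum_range_succ' b n
    have h2 : ∑ i ∈ Finset.range (n + 1), b i = (∑ i ∈ Finset.range n, b i) + b n :=
      Finset.sum_range_succ b n
    have h3 : b n = 0 := hb0 a b hba ha0 n le_rfl
    omega
  omega

end Forward


lemma descend {n : ℕ} {P : ℕ → Prop} (base : ∀ i, n ≤ i → P i)
    (step : ∀ i, i < n → P (i + 1) → P i) : ∀ i, P i := by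
  have key : ∀ d i, n ≤ i + d → P i := by
    intro d
    induction d with
    | zero => intro i h; exact base i (by omega)
    | succ d ih =>
      intro i h
      rcases le_or_gt n i with h' | h'
      · exact base i h'
      · exact step i h' (ih (i + 1) (by omega))
  intro i; exact key n i (by omega)

def MI (n : ℕ) (A B : ℕ → ℕ) (i : ℕ) : ℕ := (Finset.Icc (i + 1) n).sup fun k => B (k - 1) - A k

section Inverse

variable {n : ℕ} (A B : ℕ → ℕ)
  (hA : ∀ i, A (i + 1) ≤ A i) (hB : ∀ i, B (i + 1) ≤ B i)
  (hA0 : ∀ i, n ≤ i → A i = 0) (hB0 : ∀ i, n ≤ i → B i = 0)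

lemma MI_zero {i : ℕ} (h : n ≤ i) : MI n A B i = 0 := by
  unfold MI
  rw [Finset.Icc_eq_empty (by omega)]
  rfl

lemma MI_succ_le (i : ℕ) : MI n A B (i + 1) ≤ MI n A B i :=
  Finset.sup_mono (Finset.Icc_subset_Icc (by omega) le_rfl)

lemma MI_split {i : ℕ} (h : i + 1 ≤ n) :
    MI n A B i = max (B i - A (i + 1)) (MI n A B (i + 1)) := by
  unfold MI
  have hins : Finset.Icc (i + 1) n = insert (i + 1) (Finset.Icc (i + 2) n) := by
    ext x
    simp only [Finset.mem_Icc, Finset.mem_insert]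
    omega
  rw [hins, Finset.sup_insert]
  simp

include hB in
lemma MI_le_B (i : ℕ) : MI n A B i ≤ B i := by
  apply Finset.sup_le
  intro k hk
  rw [Finset.mem_Icc] at hk
  have h1 : B (k - 1) ≤ B i := by
    have : Antitone B := antitone_nat_of_succ_le hB
    exact this (by omega)
  omega

lemma le_MI {i : ℕ} (h : i + 1 ≤ n) : B i - A (i + 1) ≤ MI n A B i := by
  have : i + 1 ∈ Finset.Icc (i + 1) n := by rw [Finset.mem_Icc]; omega
  have h2 := Finset.le_sup (f := fun k => B (k - 1) - A k) this
  exact h2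

def aI (n : ℕ) (A B : ℕ → ℕ) (i : ℕ) : ℕ := A i + MI n A B i
def bI (n : ℕ) (A B : ℕ → ℕ) : ℕ → ℕ := fun i =>
  match i with
  | 0 => A 0
  | j + 1 => B j - MI n A B j

include hB0 in
lemma bI_le_A_succ (i : ℕ) : B i - MI n A B i ≤ A (i + 1) := by
  rcases le_or_gt n i with h | h
  · rw [hB0 i h]; omega
  · have := le_MI A B (show i + 1 ≤ n by omega)
    omega

include hA hB0 in
lemma bI_le_A (i : ℕ) : B i - MI n A B i ≤ A i :=
  le_trans (bI_le_A_succ A B hB0 i) (hA i)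

include hA hB0 in
lemma bI_le_aI : ∀ i, bI n A B i ≤ aI n A B i := by
  intro i
  cases i with
  | zero => exact Nat.le_add_right _ _
  | succ j =>
    show B j - MI n A B j ≤ A (j + 1) + MI n A B (j + 1)
    have := bI_le_A_succ A B hB0 j
    omega

include hA hB hB0 in
lemma bI_anti : ∀ i, bI n A B (i + 1) ≤ bI n A B i := by
  intro i
  cases i with
  | zero =>
    show B 0 - MI n A B 0 ≤ A 0
    exact bI_le_A A B hA hB0 0
  | succ j =>
    show B (j + 1) - MI n A B (j + 1) ≤ B j - MI n A B j
    rcases le_or_gt n j with h | h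
    · rw [hB0 (j + 1) (by omega), hB0 j h]; omega
    · -- j < n, so j+1 ≤ n ; use split
      have hsplit := MI_split A B (show j + 1 ≤ n by omega)
      rcases le_total (B j - A (j + 1)) (MI n A B (j + 1)) with hc | hc
      · have hMeq : MI n A B j = MI n A B (j + 1) := by rw [hsplit]; omega
        have := hB j
        omega
      · have hMeq : MI n A B j = B j - A (j + 1) := by rw [hsplit]; omega
        rcases le_or_gt (B j) (A (j + 1)) with hd | hd
        · -- then MI j = 0 hence MI (j+1) = 0
          have h0 : MI n A B j = 0 := by omega
          have h1 : MI n A B (j + 1) = 0 := by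
            have := MI_succ_le (n := n) A B j; omega
          have := hB j
          omega
        · -- A (j+1) < B j
          have hle : B (j + 1) - MI n A B (j + 1) ≤ A (j + 2) := bI_le_A_succ A B hB0 (j + 1)
          have h5 : A (j + 2) ≤ A (j + 1) := hA (j + 1)
          omega

include hA0 in
lemma aI_zero : ∀ i, n ≤ i → aI n A B i = 0 := by
  intro i hi
  unfold aI
  rw [hA0 i hi, MI_zero A B hi]

include hA hB hA0 hB0 in
lemma aI_bI_stat :
    ∑ i ∈ Finset.range n, (aI n A B i + bI n A B i)
      = (∑ i ∈ Finset.range n, (A i + B i)) + A 0 := by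
  cases n with
  | zero => simp [hA0 0 le_rfl]
  | succ m =>
    have hMm : MI (m + 1) A B m = B m := by
      rw [MI_split A B (le_refl (m + 1))]
      rw [hA0 (m + 1) (by omega), MI_zero A B (le_refl (m + 1))]
      omega
    -- sum of aI
    have hsa : ∑ i ∈ Finset.range (m + 1), aI (m + 1) A B i
        = (∑ i ∈ Finset.range (m + 1), A i) + ∑ i ∈ Finset.range (m + 1), MI (m + 1) A B i := by
      unfold aI; rw [Finset.sum_add_distrib]
    have hsb : ∑ i ∈ Finset.range (m + 1), bI (m + 1) A B i
        = A 0 + ∑ i ∈ Finset.range m, (B i - MI (m + 1) A B i) := by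
      rw [Finset.sum_range_succ' (bI (m + 1) A B) m]
      show (∑ i ∈ Finset.range m, (B i - MI (m+1) A B i)) + A 0 = _
      omega
    rw [Finset.sum_add_distrib, hsa, hsb]
    rw [Finset.sum_range_succ (fun i => MI (m + 1) A B i) m, hMm]
    have hR : ∑ i ∈ Finset.range (m + 1), (A i + B i)
        = ∑ i ∈ Finset.range (m + 1), A i + ∑ i ∈ Finset.range (m + 1), B i :=
      Finset.sum_add_distrib
    have hBs : ∑ i ∈ Finset.range (m + 1), B i = (∑ i ∈ Finset.range m, B i) + B m :=
      Finset.sum_range_succ _ _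
    rw [hR, hBs]
    have hcomb : (∑ i ∈ Finset.range m, MI (m + 1) A B i)
        + (∑ i ∈ Finset.range m, (B i - MI (m + 1) A B i)) = ∑ i ∈ Finset.range m, B i := by
      rw [← Finset.sum_add_distrib]
      apply Finset.sum_congr rfl
      intro i _
      have := MI_le_B (n := m + 1) A B hB i
      omega
    omega

end Inverse

section RoundTrips

variable {n : ℕ}

/-- Round trip 1: applying the inverse `MI` construction to the forward image gives back `Mf`. -/
lemma MI_eq_Mf (a b : ℕ → ℕ)
    (hba : ∀ i, b i ≤ a i) (ha : ∀ i, a (i + 1) ≤ a i) (hb : ∀ i, b (i + 1) ≤ b i)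
    (ha0 : ∀ i, n ≤ i → a i = 0) :
    ∀ i, MI n (Af a b) (Bf a b) i = Mf a b i := by
  apply descend
  · intro i hi
    rw [MI_zero _ _ hi, Mf_zero a b hba ha0 i hi]
  · intro i hi ih
    rw [MI_split _ _ (show i + 1 ≤ n by omega), ih]
    show max (Bf a b i - Af a b (i + 1)) (Mf a b (i + 1)) = Mf a b i
    unfold Af Bf
    have h1 : b (i + 1) ≤ a (i + 1) := hba (i + 1)
    have h2 : Mf a b (i + 1) = min (Mf a b i) (a (i + 1) - b (i + 1)) := rfl
    omega

lemma aI_Af_Bf (a b : ℕ → ℕ)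
    (hba : ∀ i, b i ≤ a i) (ha : ∀ i, a (i + 1) ≤ a i) (hb : ∀ i, b (i + 1) ≤ b i)
    (ha0 : ∀ i, n ≤ i → a i = 0) :
    aI n (Af a b) (Bf a b) = a := by
  funext i
  unfold aI
  rw [MI_eq_Mf a b hba ha hb ha0]
  unfold Af
  have h1 : Mf a b i ≤ a i - b i := Mf_le' a b i
  have := hba i
  omega

lemma bI_Af_Bf (a b : ℕ → ℕ)
    (hba : ∀ i, b i ≤ a i) (ha : ∀ i, a (i + 1) ≤ a i) (hb : ∀ i, b (i + 1) ≤ b i)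
    (ha0 : ∀ i, n ≤ i → a i = 0) :
    bI n (Af a b) (Bf a b) = b := by
  funext i
  cases i with
  | zero =>
    show Af a b 0 = b 0
    unfold Af
    show a 0 - (a 0 - b 0) = b 0
    have := hba 0; omega
  | succ j =>
    show Bf a b j - MI n (Af a b) (Bf a b) j = b (j + 1)
    rw [MI_eq_Mf a b hba ha hb ha0]
    unfold Bf
    omega

/-- Round trip 2: applying the forward `Mf` construction to the inverse image gives back `MI`. -/
lemma Mf_eq_MI (A B : ℕ → ℕ)
    (hA : ∀ i, A (i + 1) ≤ A i) (hB : ∀ i, B (i + 1) ≤ B i)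
    (hA0 : ∀ i, n ≤ i → A i = 0) (hB0 : ∀ i, n ≤ i → B i = 0) :
    ∀ i, Mf (aI n A B) (bI n A B) i = MI n A B i := by
  intro i
  induction i with
  | zero =>
    show aI n A B 0 - bI n A B 0 = MI n A B 0
    have hb0 : bI n A B 0 = A 0 := rfl
    unfold aI
    rw [hb0]
    omega
  | succ j ih =>
    show min (Mf (aI n A B) (bI n A B) j) (aI n A B (j + 1) - bI n A B (j + 1)) = MI n A B (j + 1)
    rw [ih]
    show min (MI n A B j) (A (j + 1) + MI n A B (j + 1) - (B j - MI n A B j)) = MI n A B (j + 1)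
    rcases le_or_gt n j with h | h
    · rw [MI_zero A B h, MI_zero A B (show n ≤ j + 1 by omega)]
      simp
    · rw [MI_split A B (show j + 1 ≤ n by omega)]
      have h2 := MI_succ_le (n := n) A B j
      rw [MI_split A B (show j + 1 ≤ n by omega)] at h2
      omega

lemma Af_aI_bI (A B : ℕ → ℕ)
    (hA : ∀ i, A (i + 1) ≤ A i) (hB : ∀ i, B (i + 1) ≤ B i)
    (hA0 : ∀ i, n ≤ i → A i = 0) (hB0 : ∀ i, n ≤ i → B i = 0) :
    Af (aI n A B) (bI n A B) = A := by
  funext i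
  unfold Af
  rw [Mf_eq_MI A B hA hB hA0 hB0]
  unfold aI
  omega

lemma Bf_aI_bI (A B : ℕ → ℕ)
    (hA : ∀ i, A (i + 1) ≤ A i) (hB : ∀ i, B (i + 1) ≤ B i)
    (hA0 : ∀ i, n ≤ i → A i = 0) (hB0 : ∀ i, n ≤ i → B i = 0) :
    Bf (aI n A B) (bI n A B) = B := by
  funext i
  unfold Bf
  rw [Mf_eq_MI A B hA hB hA0 hB0]
  show MI n A B i + bI n A B (i + 1) = B i
  show MI n A B i + (B i - MI n A B i) = B i
  have := MI_le_B (n := n) A B hB i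
  omega

/-- The main bijection. -/
def ppEquivDD (n N : ℕ) : PP n N ≃ DD n N where
  toFun p := ⟨(Af p.1.1 p.1.2, Bf p.1.1 p.1.2), by
    obtain ⟨⟨hba, ha, hb, ha0⟩, hsum⟩ := p.2
    exact ⟨⟨Af_anti _ _ hba ha hb, Bf_anti _ _ hb,
      Af_zero _ _ hba ha0, Bf_zero _ _ hba ha0⟩, by
        rw [Af_Bf_stat _ _ hba ha0]; exact hsum⟩⟩
  invFun q := ⟨(aI n q.1.1 q.1.2, bI n q.1.1 q.1.2), by
    obtain ⟨⟨hA, hB, hA0, hB0⟩, hsum⟩ := q.2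
    exact ⟨⟨bI_le_aI _ _ hA hB0, fun i => add_le_add (hA i) (MI_succ_le _ _ i),
      bI_anti _ _ hA hB hB0, aI_zero _ _ hA0⟩, by
        rw [aI_bI_stat _ _ hA hB hA0 hB0]; exact hsum⟩⟩
  left_inv p := by
    obtain ⟨⟨hba, ha, hb, ha0⟩, hsum⟩ := p.2
    apply Subtype.ext
    show (aI n (Af p.1.1 p.1.2) (Bf p.1.1 p.1.2), bI n (Af p.1.1 p.1.2) (Bf p.1.1 p.1.2)) = p.1
    rw [aI_Af_Bf _ _ hba ha hb ha0, bI_Af_Bf _ _ hba ha hb ha0]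
  right_inv q := by
    obtain ⟨⟨hA, hB, hA0, hB0⟩, hsum⟩ := q.2
    apply Subtype.ext
    show (Af (aI n q.1.1 q.1.2) (bI n q.1.1 q.1.2), Bf (aI n q.1.1 q.1.2) (bI n q.1.1 q.1.2)) = q.1
    rw [Af_aI_bI _ _ hA hB hA0 hB0, Bf_aI_bI _ _ hA hB hA0 hB0]

end RoundTrips

/-! ### From decreasing pairs to difference vectors -/

def XY (n N : ℕ) :=
  {p : (ℕ → ℕ) × (ℕ → ℕ) //
    (∀ i, n ≤ i → p.1 i = 0) ∧ (∀ i, n ≤ i → p.2 i = 0) ∧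
    ∑ i ∈ Finset.range n, ((i + 2) * p.1 i + (i + 1) * p.2 i) = N}

/-- suffix sum -/
def SS (n : ℕ) (x : ℕ → ℕ) (i : ℕ) : ℕ := ∑ k ∈ Finset.Ico i n, x k

lemma SS_anti (n : ℕ) (x : ℕ → ℕ) (i : ℕ) : SS n x (i + 1) ≤ SS n x i :=
  Finset.sum_le_sum_of_subset (Finset.Ico_subset_Ico (by omega) le_rfl)

lemma SS_zero (n : ℕ) (x : ℕ → ℕ) {i : ℕ} (h : n ≤ i) : SS n x i = 0 := by
  unfold SS
  rw [Finset.Ico_eq_empty (by omega)]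
  rfl

lemma SS_split (n : ℕ) (x : ℕ → ℕ) {i : ℕ} (h : i < n) :
    SS n x i = x i + SS n x (i + 1) :=
  Finset.sum_eq_sum_Ico_succ_bot h x

lemma SS_head (n : ℕ) (x : ℕ → ℕ) : SS n x 0 = ∑ k ∈ Finset.range n, x k := by
  unfold SS
  rw [Finset.range_eq_Ico]

lemma SS_total (n : ℕ) (x : ℕ → ℕ) :
    ∑ i ∈ Finset.range n, SS n x i = ∑ k ∈ Finset.range n, (k + 1) * x k := by
  induction n with
  | zero => simp
  | succ m ih =>
    rw [Finset.sum_range_succ (fun i => SS (m + 1) x i) m,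
      Finset.sum_range_succ (fun k => (k + 1) * x k) m]
    have hlast : SS (m + 1) x m = x m := by
      unfold SS
      rw [show Finset.Ico m (m + 1) = {m} from by ext t; simp [Finset.mem_Ico]]
      simp
    have hstep : ∀ i ∈ Finset.range m, SS (m + 1) x i = SS m x i + x m := by
      intro i hi
      rw [Finset.mem_range] at hi
      unfold SS
      rw [Finset.sum_Ico_succ_top (by omega) x]
    rw [Finset.sum_congr rfl hstep, Finset.sum_add_distrib, ih, hlast]
    rw [Finset.sum_const, Finset.card_range]
    ring

lemma SS_diff (n : ℕ) (A : ℕ → ℕ) (hA : ∀ i, A (i + 1) ≤ A i) (hA0 : ∀ i, n ≤ i → A i = 0) :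
    ∀ i, SS n (fun k => A k - A (k + 1)) i = A i := by
  apply descend
  · intro i hi
    rw [SS_zero n _ hi, hA0 i hi]
  · intro i hi ih
    rw [SS_split n _ hi, ih]
    have := hA i
    omega

lemma diff_SS (n : ℕ) (x : ℕ → ℕ) (hx : ∀ i, n ≤ i → x i = 0) (i : ℕ) :
    SS n x i - SS n x (i + 1) = x i := by
  rcases lt_or_ge i n with h | h
  · have := SS_split n x h
    omega
  · rw [SS_zero n x h, SS_zero n x (by omega : n ≤ i + 1), hx i h]

def ddEquivXY (n N : ℕ) : DD n N ≃ XY n N where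
  toFun q := ⟨(fun i => q.1.1 i - q.1.1 (i + 1), fun i => q.1.2 i - q.1.2 (i + 1)), by
    obtain ⟨⟨hA, hB, hA0, hB0⟩, hsum⟩ := q.2
    dsimp only
    refine ⟨fun i hi => by rw [hA0 i hi, hA0 (i + 1) (by omega)],
      fun i hi => by rw [hB0 i hi, hB0 (i + 1) (by omega)], ?_⟩
    have h1 : ∑ i ∈ Finset.range n, SS n (fun k => q.1.1 k - q.1.1 (k + 1)) i
        = ∑ i ∈ Finset.range n, q.1.1 i :=
      Finset.sum_congr rfl fun i _ => SS_diff n _ hA hA0 i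
    have h2 : ∑ i ∈ Finset.range n, SS n (fun k => q.1.2 k - q.1.2 (k + 1)) i
        = ∑ i ∈ Finset.range n, q.1.2 i :=
      Finset.sum_congr rfl fun i _ => SS_diff n _ hB hB0 i
    have h3 := SS_total n (fun k => q.1.1 k - q.1.1 (k + 1))
    have h4 := SS_total n (fun k => q.1.2 k - q.1.2 (k + 1))
    have h5 : SS n (fun k => q.1.1 k - q.1.1 (k + 1)) 0 = q.1.1 0 := SS_diff n _ hA hA0 0
    have h6 := SS_head n (fun k => q.1.1 k - q.1.1 (k + 1))
    -- combine
    have hsplit : ∑ i ∈ Finset.range n,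
        ((i + 2) * (q.1.1 i - q.1.1 (i + 1)) + (i + 1) * (q.1.2 i - q.1.2 (i + 1)))
        = (∑ i ∈ Finset.range n, (i + 1) * (q.1.1 i - q.1.1 (i + 1)))
          + (∑ i ∈ Finset.range n, (q.1.1 i - q.1.1 (i + 1)))
          + ∑ i ∈ Finset.range n, (i + 1) * (q.1.2 i - q.1.2 (i + 1)) := by
      rw [← Finset.sum_add_distrib, ← Finset.sum_add_distrib]
      apply Finset.sum_congr rfl
      intro i _
      ring
    have hAB : ∑ i ∈ Finset.range n, (q.1.1 i + q.1.2 i)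
        = ∑ i ∈ Finset.range n, q.1.1 i + ∑ i ∈ Finset.range n, q.1.2 i :=
      Finset.sum_add_distrib
    omega⟩
  invFun p := ⟨(SS n p.1.1, SS n p.1.2), by
    obtain ⟨hx, hy, hsum⟩ := p.2
    dsimp only
    refine ⟨⟨SS_anti n p.1.1, SS_anti n p.1.2,
      fun i hi => SS_zero n _ hi, fun i hi => SS_zero n _ hi⟩, ?_⟩
    have h3 := SS_total n p.1.1
    have h4 := SS_total n p.1.2
    have h6 := SS_head n p.1.1
    have hAB : ∑ i ∈ Finset.range n, (SS n p.1.1 i + SS n p.1.2 i)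
        = ∑ i ∈ Finset.range n, SS n p.1.1 i + ∑ i ∈ Finset.range n, SS n p.1.2 i :=
      Finset.sum_add_distrib
    have hsplit : ∑ i ∈ Finset.range n, ((i + 2) * p.1.1 i + (i + 1) * p.1.2 i)
        = (∑ i ∈ Finset.range n, (i + 1) * p.1.1 i) + (∑ i ∈ Finset.range n, p.1.1 i)
          + ∑ i ∈ Finset.range n, (i + 1) * p.1.2 i := by
      rw [← Finset.sum_add_distrib, ← Finset.sum_add_distrib]
      apply Finset.sum_congr rfl
      intro i _
      ring
    omega⟩
  left_inv q := by
    obtain ⟨⟨hA, hB, hA0, hB0⟩, hsum⟩ := q.2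
    apply Subtype.ext
    show (SS n (fun k => q.1.1 k - q.1.1 (k + 1)), SS n (fun k => q.1.2 k - q.1.2 (k + 1))) = q.1
    have e1 : SS n (fun k => q.1.1 k - q.1.1 (k + 1)) = q.1.1 := funext (SS_diff n _ hA hA0)
    have e2 : SS n (fun k => q.1.2 k - q.1.2 (k + 1)) = q.1.2 := funext (SS_diff n _ hB hB0)
    rw [e1, e2]
  right_inv p := by
    obtain ⟨hx, hy, hsum⟩ := p.2
    apply Subtype.ext
    show (fun i => SS n p.1.1 i - SS n p.1.1 (i + 1), fun i => SS n p.1.2 i - SS n p.1.2 (i + 1)) = p.1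
    have e1 : (fun i => SS n p.1.1 i - SS n p.1.1 (i + 1)) = p.1.1 := funext (diff_SS n _ hx)
    have e2 : (fun i => SS n p.1.2 i - SS n p.1.2 (i + 1)) = p.1.2 := funext (diff_SS n _ hy)
    rw [e1, e2]

/-! ### Gluing the two difference vectors into one weighted vector -/

def CNT (w : ℕ → ℕ) (n N : ℕ) :=
  {x : ℕ → ℕ // (∀ i, n ≤ i → x i = 0) ∧ ∑ i ∈ Finset.range n, w i * x i = N}

def wfun (n : ℕ) : ℕ → ℕ := fun i => if i < n then i + 1 else i + 2 - n

def xyEquivCNT (n N : ℕ) : XY n N ≃ CNT (wfun n) (n + n) N where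
  toFun p := ⟨fun i => if i < n then p.1.2 i else p.1.1 (i - n), by
    obtain ⟨hx, hy, hsum⟩ := p.2
    dsimp only
    constructor
    · intro i hi
      rw [if_neg (by omega)]
      exact hx _ (by omega)
    · rw [Finset.sum_range_add (fun i => wfun n i * (if i < n then p.1.2 i else p.1.1 (i - n))) n n]
      have e1 : ∀ i ∈ Finset.range n,
          wfun n i * (if i < n then p.1.2 i else p.1.1 (i - n)) = (i + 1) * p.1.2 i := by
        intro i hi
        rw [Finset.mem_range] at hi
        rw [if_pos hi]
        unfold wfun
        rw [if_pos hi]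
      have e2 : ∀ i ∈ Finset.range n,
          wfun n (n + i) * (if n + i < n then p.1.2 (n + i) else p.1.1 (n + i - n))
            = (i + 2) * p.1.1 i := by
        intro i hi
        rw [if_neg (by omega)]
        unfold wfun
        rw [if_neg (by omega)]
        have h1 : n + i + 2 - n = i + 2 := by omega
        have h2 : n + i - n = i := by omega
        rw [h1, h2]
      rw [Finset.sum_congr rfl e1, Finset.sum_congr rfl e2]
      have hd : ∑ i ∈ Finset.range n, ((i + 2) * p.1.1 i + (i + 1) * p.1.2 i)
          = ∑ i ∈ Finset.range n, (i + 2) * p.1.1 i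
            + ∑ i ∈ Finset.range n, (i + 1) * p.1.2 i := Finset.sum_add_distrib
      omega⟩
  invFun x := ⟨(fun i => x.1 (n + i), fun i => if i < n then x.1 i else 0), by
    obtain ⟨hx, hsum⟩ := x.2
    dsimp only
    refine ⟨fun i hi => hx _ (by omega), fun i hi => by rw [if_neg (by omega)], ?_⟩
    rw [Finset.sum_range_add (fun i => wfun n i * x.1 i) n n] at hsum
    have e1 : ∀ i ∈ Finset.range n, wfun n i * x.1 i = (i + 1) * x.1 i := by
      intro i hi
      rw [Finset.mem_range] at hi
      unfold wfun
      rw [if_pos hi]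
    have e2 : ∀ i ∈ Finset.range n, wfun n (n + i) * x.1 (n + i) = (i + 2) * x.1 (n + i) := by
      intro i hi
      unfold wfun
      rw [if_neg (by omega)]
      have h1 : n + i + 2 - n = i + 2 := by omega
      rw [h1]
    rw [Finset.sum_congr rfl e1, Finset.sum_congr rfl e2] at hsum
    have e3 : ∀ i ∈ Finset.range n,
        (i + 2) * x.1 (n + i) + (i + 1) * (if i < n then x.1 i else 0)
          = (i + 2) * x.1 (n + i) + (i + 1) * x.1 i := by
      intro i hi
      rw [Finset.mem_range] at hi
      rw [if_pos hi]
    rw [Finset.sum_congr rfl e3, Finset.sum_add_distrib]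
    omega⟩
  left_inv p := by
    obtain ⟨hx, hy, hsum⟩ := p.2
    apply Subtype.ext
    apply Prod.ext
    · funext i
      show (if n + i < n then p.1.2 (n + i) else p.1.1 (n + i - n)) = p.1.1 i
      rw [if_neg (by omega)]
      have h1 : n + i - n = i := by omega
      rw [h1]
    · funext i
      show (if i < n then (if i < n then p.1.2 i else p.1.1 (i - n)) else 0) = p.1.2 i
      rcases lt_or_ge i n with h | h
      · rw [if_pos h, if_pos h]
      · rw [if_neg (by omega), hy i h]
  right_inv x := by
    obtain ⟨hx, hsum⟩ := x.2
    apply Subtype.ext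
    funext i
    show (if i < n then (if i < n then x.1 i else 0) else x.1 (n + (i - n))) = x.1 i
    rcases lt_or_ge i n with h | h
    · rw [if_pos h, if_pos h]
    · rw [if_neg (by omega)]
      have h1 : n + (i - n) = i := by omega
      rw [h1]

/-! ### From `Fin`-indexed data to padded ℕ-indexed data -/

def finPP (n N : ℕ) :=
  {p : (Fin n → ℕ) × (Fin n → ℕ) //
    (∀ i, p.2 i ≤ p.1 i) ∧
    (∀ i : Fin n, ∀ h : (i : ℕ) + 1 < n, p.1 ⟨(i : ℕ) + 1, h⟩ ≤ p.1 i) ∧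
    (∀ i : Fin n, ∀ h : (i : ℕ) + 1 < n, p.2 ⟨(i : ℕ) + 1, h⟩ ≤ p.2 i) ∧
    (∑ i, p.1 i) + (∑ i, p.2 i) = N}

/-- padding function -/
def pad (n : ℕ) (f : Fin n → ℕ) (i : ℕ) : ℕ := if h : i < n then f ⟨i, h⟩ else 0

lemma pad_sum (n : ℕ) (f : Fin n → ℕ) : ∑ i ∈ Finset.range n, pad n f i = ∑ i, f i := by
  rw [← Fin.sum_univ_eq_sum_range (fun i => pad n f i) n]
  apply Finset.sum_congr rfl
  intro i _
  unfold pad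
  rw [dif_pos i.isLt]

lemma pad_anti (n : ℕ) (f : Fin n → ℕ)
    (hf : ∀ i : Fin n, ∀ h : (i : ℕ) + 1 < n, f ⟨(i : ℕ) + 1, h⟩ ≤ f i) (i : ℕ) :
    pad n f (i + 1) ≤ pad n f i := by
  unfold pad
  rcases lt_or_ge (i + 1) n with h1 | h1
  · rw [dif_pos h1, dif_pos (by omega : i < n)]
    exact hf ⟨i, by omega⟩ h1
  · rw [dif_neg (by omega)]
    exact Nat.zero_le _

def finEquivPP (n N : ℕ) : finPP n N ≃ PP n N where
  toFun p := ⟨(pad n p.1.1, pad n p.1.2), by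
    obtain ⟨hba, ha, hb, hsum⟩ := p.2
    dsimp only
    refine ⟨⟨?_, pad_anti n p.1.1 ha, pad_anti n p.1.2 hb, ?_⟩, ?_⟩
    · intro i
      unfold pad
      rcases lt_or_ge i n with h1 | h1
      · rw [dif_pos h1, dif_pos h1]; exact hba ⟨i, h1⟩
      · rw [dif_neg (by omega), dif_neg (by omega)]
    · intro i hi
      unfold pad
      rw [dif_neg (by omega)]
    · rw [Finset.sum_add_distrib, pad_sum, pad_sum]
      exact hsum⟩
  invFun q := ⟨(fun i => q.1.1 i, fun i => q.1.2 i), by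
    obtain ⟨⟨hba, ha, hb, ha0⟩, hsum⟩ := q.2
    refine ⟨fun i => hba i, fun i h => ha i, fun i h => hb i, ?_⟩
    have h1 : ∑ i : Fin n, q.1.1 (i : ℕ) = ∑ i ∈ Finset.range n, q.1.1 i :=
      Fin.sum_univ_eq_sum_range (fun i => q.1.1 i) n
    have h2 : ∑ i : Fin n, q.1.2 (i : ℕ) = ∑ i ∈ Finset.range n, q.1.2 i :=
      Fin.sum_univ_eq_sum_range (fun i => q.1.2 i) n
    rw [h1, h2, ← Finset.sum_add_distrib]
    exact hsum⟩
  left_inv p := by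
    apply Subtype.ext
    apply Prod.ext
    · funext i
      show pad n p.1.1 (i : ℕ) = p.1.1 i
      unfold pad
      rw [dif_pos i.isLt]
    · funext i
      show pad n p.1.2 (i : ℕ) = p.1.2 i
      unfold pad
      rw [dif_pos i.isLt]
  right_inv q := by
    obtain ⟨⟨hba, ha, hb, ha0⟩, hsum⟩ := q.2
    have hb0 : ∀ i, n ≤ i → q.1.2 i = 0 := fun i hi => by
      have := hba i; have := ha0 i hi; omega
    apply Subtype.ext
    apply Prod.ext
    · funext i
      show pad n (fun j : Fin n => q.1.1 (j : ℕ)) i = q.1.1 i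
      unfold pad
      rcases lt_or_ge i n with h1 | h1
      · rw [dif_pos h1]
      · rw [dif_neg (by omega), ha0 i h1]
    · funext i
      show pad n (fun j : Fin n => q.1.2 (j : ℕ)) i = q.1.2 i
      unfold pad
      rcases lt_or_ge i n with h1 | h1
      · rw [dif_pos h1]
      · rw [dif_neg (by omega), hb0 i h1]

/-! ### Counting lemmas -/

lemma cnt_finite {w : ℕ → ℕ} {n N : ℕ} (hw : ∀ t, t < n → 1 ≤ w t) : Finite (CNT w n N) := by
  have hbound : ∀ (x : CNT w n N) (i : Fin n), x.1 (i : ℕ) < N + 1 := by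
    intro x i
    obtain ⟨hx0, hxs⟩ := x.2
    have h1 : w (i : ℕ) * x.1 (i : ℕ) ≤ ∑ j ∈ Finset.range n, w j * x.1 j :=
      Finset.single_le_sum (f := fun j => w j * x.1 j)
        (fun j _ => Nat.zero_le _) (Finset.mem_range.mpr i.isLt)
    have h2 : 1 ≤ w (i : ℕ) := hw _ i.isLt
    have h3 : x.1 (i : ℕ) ≤ w (i : ℕ) * x.1 (i : ℕ) := Nat.le_mul_of_pos_left _ (by omega)
    omega
  apply Finite.of_injective
    (fun x : CNT w n N => fun i : Fin n => (⟨x.1 (i : ℕ), hbound x i⟩ : Fin (N + 1)))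
  intro x y h
  apply Subtype.ext
  funext i
  rcases lt_or_ge i n with h1 | h1
  · have h2 := congrFun h ⟨i, h1⟩
    simpa using h2
  · rw [x.2.1 i h1, y.2.1 i h1]

lemma card_cnt_zero (w : ℕ → ℕ) (N : ℕ) :
    Nat.card (CNT w 0 N) = if N = 0 then 1 else 0 := by
  rcases eq_or_ne N 0 with rfl | hN
  · rw [if_pos rfl]
    refine Nat.card_eq_one_iff_unique.mpr ⟨⟨?_⟩, ⟨⟨fun _ => 0, fun i _ => rfl, by simp⟩⟩⟩
    rintro ⟨x, hx, _⟩ ⟨y, hy, _⟩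
    apply Subtype.ext
    funext i
    show x i = y i
    rw [hx i (by omega), hy i (by omega)]
  · rw [if_neg hN]
    have : IsEmpty (CNT w 0 N) := ⟨by
      rintro ⟨x, hx, hs⟩
      simp at hs
      exact hN hs.symm⟩
    exact Nat.card_of_isEmpty

lemma card_cnt_succ (w : ℕ → ℕ) (n N : ℕ) (hw : ∀ t, t < n + 1 → 1 ≤ w t) :
    Nat.card (CNT w (n + 1) N)
      = ∑ p ∈ Finset.HasAntidiagonal.antidiagonal N, (if w n ∣ p.1 then Nat.card (CNT w n p.2) else 0) := by
  classical
  have hwn : 0 < w n := hw n (by omega)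
  have key : Nat.card (CNT w (n + 1) N)
      = Nat.card (Σ p : ((Finset.HasAntidiagonal.antidiagonal N).filter (fun p => w n ∣ p.1) : Finset (ℕ × ℕ)),
          CNT w n p.1.2) := by
    apply Nat.card_congr
    apply Equiv.symm
    apply Equiv.ofBijective
      (f := fun z : Σ p : ((Finset.HasAntidiagonal.antidiagonal N).filter (fun p => w n ∣ p.1) : Finset (ℕ × ℕ)),
          CNT w n p.1.2 =>
      (⟨Function.update z.2.1 n (z.1.1.1 / w n), by
        have hmem := z.1.2
        simp only [Finset.mem_filter, Finset.HasAntidiagonal.mem_antidiagonal] at hmem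
        constructor
        · intro i hi
          rw [Function.update_of_ne (by omega)]
          exact z.2.2.1 i (by omega)
        · have hsplit : ∑ i ∈ Finset.range (n + 1),
              w i * Function.update z.2.1 n (z.1.1.1 / w n) i
              = (∑ i ∈ Finset.range n, w i * Function.update z.2.1 n (z.1.1.1 / w n) i)
                + w n * Function.update z.2.1 n (z.1.1.1 / w n) n :=
            Finset.sum_range_succ _ _
          have e1 : ∑ i ∈ Finset.range n, w i * Function.update z.2.1 n (z.1.1.1 / w n) i
              = ∑ i ∈ Finset.range n, w i * z.2.1 i := by
            apply Finset.sum_congr rfl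
            intro i hi
            rw [Finset.mem_range] at hi
            rw [Function.update_of_ne (by omega)]
          have e2 : ∑ i ∈ Finset.range n, w i * z.2.1 i = z.1.1.2 := z.2.2.2
          have e3 : w n * Function.update z.2.1 n (z.1.1.1 / w n) n = z.1.1.1 := by
            rw [Function.update_self]
            exact Nat.mul_div_cancel' hmem.2
          omega⟩ : CNT w (n + 1) N))
    constructor
    · rintro ⟨⟨⟨p1, p2⟩, hp⟩, y⟩ ⟨⟨⟨q1, q2⟩, hq⟩, z⟩ h
      rw [Subtype.ext_iff] at h
      have hfun : Function.update y.1 n (p1 / w n) = Function.update z.1 n (q1 / w n) := h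
      have hp' := hp
      have hq' := hq
      simp only [Finset.mem_filter, Finset.HasAntidiagonal.mem_antidiagonal] at hp' hq'
      have hd1 : w n ∣ p1 := hp'.2
      have hd2 : w n ∣ q1 := hq'.2
      have hs1 : p1 + p2 = N := hp'.1
      have hs2 : q1 + q2 = N := hq'.1
      have hn : p1 / w n = q1 / w n := by
        have h0 := congrFun hfun n
        rwa [Function.update_self, Function.update_self] at h0
      have hp1q1 : p1 = q1 := by
        obtain ⟨u, hu⟩ := hd1
        obtain ⟨v, hv⟩ := hd2
        subst hu
        subst hv
        rw [Nat.mul_div_cancel_left _ hwn, Nat.mul_div_cancel_left _ hwn] at hn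
        rw [hn]
      subst hp1q1
      have hp2q2 : p2 = q2 := by omega
      subst hp2q2
      have hyz : y.1 = z.1 := by
        funext i
        rcases eq_or_ne i n with rfl | hne
        · rw [y.2.1 i le_rfl, z.2.1 i le_rfl]
        · have h0 := congrFun hfun i
          rwa [Function.update_of_ne hne, Function.update_of_ne hne] at h0
      congr 1
      exact Subtype.ext hyz
    · rintro ⟨x, hx0, hxs⟩
      have hmem : (w n * x n, ∑ i ∈ Finset.range n, w i * x i)
          ∈ (Finset.HasAntidiagonal.antidiagonal N).filter (fun p => w n ∣ p.1) := by
        simp only [Finset.mem_filter, Finset.HasAntidiagonal.mem_antidiagonal]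
        rw [Finset.sum_range_succ] at hxs
        exact ⟨by omega, dvd_mul_right _ _⟩
      refine ⟨⟨⟨_, hmem⟩, ⟨Function.update x n 0, ?_, ?_⟩⟩, ?_⟩
      · intro i hi
        rcases eq_or_ne i n with rfl | hne
        · rw [Function.update_self]
        · rw [Function.update_of_ne hne]
          exact hx0 i (by omega)
      · show ∑ i ∈ Finset.range n, w i * Function.update x n 0 i
            = ∑ i ∈ Finset.range n, w i * x i
        apply Finset.sum_congr rfl
        intro i hi
        rw [Finset.mem_range] at hi
        rw [Function.update_of_ne (by omega)]
      · apply Subtype.ext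
        show Function.update (Function.update x n 0) n (w n * x n / w n) = x
        rw [Function.update_idem]
        rw [Nat.mul_div_cancel_left _ hwn]
        exact Function.update_eq_self n x
  rw [key]
  haveI : ∀ p : ((Finset.HasAntidiagonal.antidiagonal N).filter (fun p => w n ∣ p.1) : Finset (ℕ × ℕ)),
      Finite (CNT w n (p.1.2)) := fun p => cnt_finite (fun t ht => hw t (by omega))
  letI : ∀ p : ((Finset.HasAntidiagonal.antidiagonal N).filter (fun p => w n ∣ p.1) : Finset (ℕ × ℕ)),
      Fintype (CNT w n (p.1.2)) := fun p => Fintype.ofFinite _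
  rw [Nat.card_eq_fintype_card, Fintype.card_sigma]
  have e1 : ∀ p : ((Finset.HasAntidiagonal.antidiagonal N).filter (fun p => w n ∣ p.1) : Finset (ℕ × ℕ)),
      Fintype.card (CNT w n (p.1.2)) = Nat.card (CNT w n (p.1.2)) :=
    fun p => (Nat.card_eq_fintype_card).symm
  rw [Finset.sum_congr rfl (fun p _ => e1 p)]
  rw [Finset.sum_coe_sort ((Finset.HasAntidiagonal.antidiagonal N).filter (fun p => w n ∣ p.1))
    (fun p => Nat.card (CNT w n p.2))]
  rw [Finset.sum_filter]

/-! ### Power series -/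

def ind (w : ℕ) : PowerSeries ℤ := PowerSeries.mk fun N => if w ∣ N then 1 else 0

lemma ind_inv (w : ℕ) (hw : 1 ≤ w) : ((1 : PowerSeries ℤ) - X ^ w) * ind w = 1 := by
  have h1 : (X ^ w : PowerSeries ℤ) * ind w = ind w * X ^ w := mul_comm _ _
  rw [sub_mul, one_mul, h1]
  ext N
  rw [map_sub, PowerSeries.coeff_mul_X_pow', PowerSeries.coeff_one]
  unfold ind
  simp only [PowerSeries.coeff_mk]
  by_cases hN : N = 0
  · subst hN
    rw [if_pos (dvd_zero w), if_neg (show ¬ w ≤ 0 by omega), if_pos rfl]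
    ring
  · rw [if_neg hN]
    by_cases h2 : w ≤ N
    · rw [if_pos h2]
      have hiff : w ∣ N ↔ w ∣ N - w := by
        constructor
        · intro h; exact Nat.dvd_sub h dvd_rfl
        · intro h
          have h4 : N = N - w + w := by omega
          rw [h4]
          exact Nat.dvd_add h dvd_rfl
      by_cases h3 : w ∣ N
      · rw [if_pos h3, if_pos (hiff.mp h3)]
        ring
      · rw [if_neg h3, if_neg (fun hc => h3 (hiff.mpr hc))]
        ring
    · rw [if_neg h2]
      have h3 : ¬ w ∣ N := by
        intro hc
        have := Nat.le_of_dvd (by omega) hc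
        omega
      rw [if_neg h3]
      ring

lemma mk_cnt_succ (w : ℕ → ℕ) (n : ℕ) (hw : ∀ t, t < n + 1 → 1 ≤ w t) :
    PowerSeries.mk (fun N => (Nat.card (CNT w (n + 1) N) : ℤ))
      = ind (w n) * PowerSeries.mk (fun N => (Nat.card (CNT w n N) : ℤ)) := by
  ext N
  rw [PowerSeries.coeff_mk, PowerSeries.coeff_mul, card_cnt_succ w n N hw]
  push_cast
  apply Finset.sum_congr rfl
  intro p _
  unfold ind
  rw [PowerSeries.coeff_mk, PowerSeries.coeff_mk]
  rcases Classical.em (w n ∣ p.1) with h | h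
  · rw [if_pos h, if_pos h, one_mul]
  · rw [if_neg h, if_neg h, zero_mul]

lemma gf_cnt (w : ℕ → ℕ) (n : ℕ) (hw : ∀ t, t < n → 1 ≤ w t) :
    PowerSeries.mk (fun N => (Nat.card (CNT w n N) : ℤ))
      * ∏ t ∈ Finset.range n, ((1 : PowerSeries ℤ) - X ^ (w t)) = 1 := by
  induction n with
  | zero =>
    have h0 : PowerSeries.mk (fun N => (Nat.card (CNT w 0 N) : ℤ)) = 1 := by
      ext N
      rw [PowerSeries.coeff_mk, card_cnt_zero, PowerSeries.coeff_one]
      rcases eq_or_ne N 0 with rfl | hN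
      · rw [if_pos rfl, if_pos rfl]; norm_num
      · rw [if_neg hN, if_neg hN]; norm_num
    rw [h0]
    simp
  | succ m ih =>
    rw [mk_cnt_succ w m hw, Finset.prod_range_succ]
    have ihm := ih (fun t ht => hw t (by omega))
    have hr : ind (w m) * PowerSeries.mk (fun N => (Nat.card (CNT w m N) : ℤ)) *
        ((∏ t ∈ Finset.range m, ((1 : PowerSeries ℤ) - X ^ (w t))) * (1 - X ^ (w m)))
        = (PowerSeries.mk (fun N => (Nat.card (CNT w m N) : ℤ))
            * ∏ t ∈ Finset.range m, ((1 : PowerSeries ℤ) - X ^ (w t)))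
          * (((1 : PowerSeries ℤ) - X ^ (w m)) * ind (w m)) := by ring
    rw [hr, ihm, ind_inv (w m) (hw m (by omega))]
    rw [one_mul]

end TwoRowAux

/-- The generating function for two-rowed plane partitions with rows of length
`n` equals `1/((q;q)ₙ (q²;q)ₙ)`, stated with denominators cleared:
`(q;q)ₙ = ∏_{t=0}^{n−1}(1−q^{t+1})` and `(q²;q)ₙ = ∏_{t=0}^{n−1}(1−q^{t+2})`. -/
theorem twoRow_generating_function (n : ℕ) :
    PowerSeries.mk (fun N => (twoRowCount n N : ℤ)) *
      (∏ t ∈ Finset.range n, (1 - (X : PowerSeries ℤ) ^ (t + 1))) *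
      (∏ t ∈ Finset.range n, (1 - (X : PowerSeries ℤ) ^ (t + 2))) = 1 := by
  classical
  have hcount : ∀ N, twoRowCount n N = Nat.card (TwoRowAux.CNT (TwoRowAux.wfun n) (n + n) N) :=
    fun N => Nat.card_congr ((TwoRowAux.finEquivPP n N).trans ((TwoRowAux.ppEquivDD n N).trans
      ((TwoRowAux.ddEquivXY n N).trans (TwoRowAux.xyEquivCNT n N))))
  have hmk : PowerSeries.mk (fun N => (twoRowCount n N : ℤ))
      = PowerSeries.mk (fun N => (Nat.card (TwoRowAux.CNT (TwoRowAux.wfun n) (n + n) N) : ℤ)) := by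
    ext N
    rw [PowerSeries.coeff_mk, PowerSeries.coeff_mk, hcount N]
  have hpos : ∀ t, t < n + n → 1 ≤ TwoRowAux.wfun n t := by
    intro t ht
    unfold TwoRowAux.wfun
    split_ifs <;> omega
  have hprod : (∏ t ∈ Finset.range n, (1 - (X : PowerSeries ℤ) ^ (t + 1))) *
      (∏ t ∈ Finset.range n, (1 - (X : PowerSeries ℤ) ^ (t + 2)))
      = ∏ t ∈ Finset.range (n + n), ((1 : PowerSeries ℤ) - X ^ (TwoRowAux.wfun n t)) := by
    rw [Finset.prod_range_add (fun t => (1 : PowerSeries ℤ) - X ^ (TwoRowAux.wfun n t)) n n]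
    congr 1
    · apply Finset.prod_congr rfl
      intro t ht
      rw [Finset.mem_range] at ht
      unfold TwoRowAux.wfun
      rw [if_pos ht]
    · apply Finset.prod_congr rfl
      intro t ht
      unfold TwoRowAux.wfun
      rw [if_neg (by omega)]
      have h1 : n + t + 2 - n = t + 2 := by omega
      rw [h1]
  rw [hmk, mul_assoc, hprod]
  exact TwoRowAux.gf_cnt (TwoRowAux.wfun n) (n + n) hpos
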